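/- arXiv:2302.01091 — 2 statements merged into one kernel-verified Lean document; each statement's English description precedes it below -/
import Mathlib

section
/- For real z with 0 ≤ z < 1: ∑_{(j,k): j,k ≥ 1, gcd(j,k)=1} (1/k) · log(1 - z^k/2^j) = log(1 - z). Equivalently, the infinite product ∏_{gcd(j,k)=1} (1 - z^k/2^j)^{1/k} over positive coprime pairs (j,k) equals 1 - z exactly. -/
open Real

noncomputable section

private lemma hasSum_pnat' {f : ℕ+ → ℝ} {a : ℝ} (h : HasSum (fun n : ℕ => f n.succPNat) a) :
    HasSum f a :=
  (Equiv.pnatEquivNat.symm.hasSum_iff).1 h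

private lemma hasSum_log_pnat {x : ℝ} (h0 : 0 ≤ x) (h1 : x < 1) :
    HasSum (fun K : ℕ+ => x ^ (K : ℕ) / (K : ℝ)) (-Real.log (1 - x)) := by
  apply hasSum_pnat'
  have := hasSum_pow_div_log_of_abs_lt_one (x := x) (by rw [abs_of_nonneg h0]; exact h1)
  refine this.congr_fun fun n => ?_
  simp [Nat.succPNat]

private lemma hasSum_half_pnat : HasSum (fun J : ℕ+ => ((1:ℝ)/2) ^ (J : ℕ)) 1 := by
  apply hasSum_pnat'
  have := (hasSum_geometric_of_lt_one (by norm_num : (0:ℝ) ≤ 1/2) (by norm_num)).mul_left (1/2)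
  have h2 : (1/2 : ℝ) * (1 - 1/2)⁻¹ = 1 := by norm_num
  rw [h2] at this
  refine this.congr_fun fun n => ?_
  simp [Nat.succPNat, pow_succ]
  ring

private def copEquiv : ({p : ℕ+ × ℕ+ // Nat.gcd (p.1 : ℕ) (p.2 : ℕ) = 1} × ℕ+) ≃ (ℕ+ × ℕ+) :=
  Equiv.ofBijective (fun q => (q.2 * q.1.val.1, q.2 * q.1.val.2)) (by
    constructor
    · rintro ⟨⟨⟨j, k⟩, h⟩, n⟩ ⟨⟨⟨j', k'⟩, h'⟩, n'⟩ heq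
      simp only [Prod.mk.injEq] at heq
      obtain ⟨h1, h2⟩ := heq
      have hn : n = n' := by
        have c1 : (n : ℕ) * (j : ℕ) = (n' : ℕ) * (j' : ℕ) := by exact_mod_cast congrArg PNat.val h1
        have c2 : (n : ℕ) * (k : ℕ) = (n' : ℕ) * (k' : ℕ) := by exact_mod_cast congrArg PNat.val h2
        have e1 : (n : ℕ) * Nat.gcd (j : ℕ) (k : ℕ) = (n' : ℕ) * Nat.gcd (j' : ℕ) (k' : ℕ) := by
          rw [← Nat.gcd_mul_left, ← Nat.gcd_mul_left, c1, c2]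
        rw [h, h'] at e1
        exact PNat.coe_injective (by simpa using e1)
      subst hn
      have hj : j = j' := mul_left_cancel h1
      have hk : k = k' := mul_left_cancel h2
      simp [hj, hk]
    · rintro ⟨J, K⟩
      set g : ℕ := Nat.gcd (J : ℕ) (K : ℕ) with hg
      have hgpos : 0 < g := Nat.gcd_pos_of_pos_left _ J.pos
      have hjpos : 0 < (J : ℕ) / g := Nat.div_pos (Nat.le_of_dvd J.pos (Nat.gcd_dvd_left _ _)) hgpos
      have hkpos : 0 < (K : ℕ) / g := Nat.div_pos (Nat.le_of_dvd K.pos (Nat.gcd_dvd_right _ _)) hgpos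
      refine ⟨(⟨((⟨(J:ℕ)/g, hjpos⟩ : ℕ+), (⟨(K:ℕ)/g, hkpos⟩ : ℕ+)),
        Nat.coprime_div_gcd_div_gcd hgpos⟩, (⟨g, hgpos⟩ : ℕ+)), ?_⟩
      refine Prod.ext (PNat.coe_injective ?_) (PNat.coe_injective ?_)
      · show g * ((J:ℕ)/g) = (J:ℕ)
        exact Nat.mul_div_cancel' (Nat.gcd_dvd_left (J:ℕ) (K:ℕ))
      · show g * ((K:ℕ)/g) = (K:ℕ)
        exact Nat.mul_div_cancel' (Nat.gcd_dvd_right (J:ℕ) (K:ℕ)))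

set_option maxHeartbeats 1200000 in
theorem stmt_6 (z : ℝ) (hz0 : 0 ≤ z) (hz1 : z < 1) :
    (∑' p : {p : ℕ+ × ℕ+ // Nat.gcd (p.1 : ℕ) (p.2 : ℕ) = 1},
        (1 / (p.val.2 : ℝ)) *
          Real.log (1 - z ^ (p.val.2 : ℕ) / (2 : ℝ) ^ (p.val.1 : ℕ)) =
      Real.log (1 - z)) ∧
    (∏' p : {p : ℕ+ × ℕ+ // Nat.gcd (p.1 : ℕ) (p.2 : ℕ) = 1},
        (1 - z ^ (p.val.2 : ℕ) / (2 : ℝ) ^ (p.val.1 : ℕ)) ^ ((1 : ℝ) / (p.val.2 : ℝ)) =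
      1 - z) := by
  -- x_p < 1 and ≥ 0 facts
  have hxlt : ∀ j k : ℕ+, z ^ (k:ℕ) / (2:ℝ) ^ (j:ℕ) < 1 := by
    intro j k
    have h1 : z ^ (k:ℕ) < 1 := pow_lt_one₀ hz0 hz1 k.pos.ne'
    have h2 : (1:ℝ) ≤ 2 ^ (j:ℕ) := one_le_pow₀ (by norm_num)
    rw [div_lt_one (by positivity)]
    exact lt_of_lt_of_le h1 h2
  have hxnn : ∀ j k : ℕ+, 0 ≤ z ^ (k:ℕ) / (2:ℝ) ^ (j:ℕ) := fun j k => by positivity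
  -- the double-series over ℕ+ × ℕ+
  have hB := hasSum_log_pnat hz0 hz1
  have hBneg : HasSum (fun K : ℕ+ => -(z ^ (K:ℕ) / (K:ℝ))) (Real.log (1 - z)) := by
    simpa using hB.neg
  have hfnorm : Summable fun J : ℕ+ => ‖((1:ℝ)/2) ^ (J:ℕ)‖ :=
    hasSum_half_pnat.summable.congr fun J => by
      rw [Real.norm_of_nonneg (by positivity)]
  have hgnorm : Summable fun K : ℕ+ => ‖-(z ^ (K:ℕ) / (K:ℝ))‖ :=
    hB.summable.congr fun K => by
      rw [norm_neg, Real.norm_of_nonneg (by positivity)]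
  have hG : HasSum (fun x : ℕ+ × ℕ+ => ((1:ℝ)/2) ^ (x.1:ℕ) * -(z ^ (x.2:ℕ) / (x.2:ℝ)))
      (Real.log (1 - z)) := by
    have := hasSum_half_pnat.mul hBneg (summable_mul_of_summable_norm hfnorm hgnorm)
    rwa [one_mul] at this
  -- transport through the equivalence
  have hF : HasSum (fun q : {p : ℕ+ × ℕ+ // Nat.gcd (p.1 : ℕ) (p.2 : ℕ) = 1} × ℕ+ =>
      ((1:ℝ)/2) ^ (((copEquiv q).1:ℕ+):ℕ) * -(z ^ (((copEquiv q).2:ℕ+):ℕ) / (((copEquiv q).2:ℕ+):ℝ)))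
      (Real.log (1 - z)) := copEquiv.hasSum_iff.2 hG
  -- fiberwise sums
  have hfiber : ∀ p : {p : ℕ+ × ℕ+ // Nat.gcd (p.1 : ℕ) (p.2 : ℕ) = 1},
      HasSum (fun n : ℕ+ =>
        ((1:ℝ)/2) ^ (((copEquiv (p, n)).1:ℕ+):ℕ) *
          -(z ^ (((copEquiv (p, n)).2:ℕ+):ℕ) / (((copEquiv (p, n)).2:ℕ+):ℝ)))
        ((1 / (p.val.2 : ℝ)) * Real.log (1 - z ^ (p.val.2 : ℕ) / (2:ℝ) ^ (p.val.1 : ℕ))) := by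
    rintro ⟨⟨j, k⟩, h⟩
    set x : ℝ := z ^ (k:ℕ) / (2:ℝ) ^ (j:ℕ) with hxdef
    have hx0 : 0 ≤ x := hxnn j k
    have hx1 : x < 1 := hxlt j k
    have hlog := hasSum_log_pnat hx0 hx1
    have hmul : HasSum (fun n : ℕ+ => -((1:ℝ)/(k:ℝ)) * (x ^ (n:ℕ) / (n:ℝ)))
        ((1/(k:ℝ)) * Real.log (1 - x)) := by
      have := hlog.mul_left (-(1/(k:ℝ)))
      simpa [neg_mul, mul_neg, neg_neg] using this
    refine hmul.congr_fun fun n => ?_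
    show ((1:ℝ)/2) ^ (((n*j:ℕ+)):ℕ) * -(z ^ ((n*k:ℕ+):ℕ) / (((n*k:ℕ+):ℕ):ℝ)) =
      -((1:ℝ)/(k:ℝ)) * (x ^ (n:ℕ) / (n:ℝ))
    have hk : ((k:ℕ):ℝ) ≠ 0 := by positivity
    have hn : ((n:ℕ):ℝ) ≠ 0 := by positivity
    have h2 : ((2:ℝ) ^ ((j:ℕ)*(n:ℕ))) ≠ 0 := by positivity
    rw [hxdef]
    push_cast [PNat.mul_coe]
    field_simp
    ring
    simp [one_div]
  have hS := hF.prod_fiberwise hfiber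
  refine ⟨hS.tsum_eq, ?_⟩
  have hz1' : 0 < 1 - z := by linarith
  have hP := hS.rexp
  have hP' : HasProd (fun p : {p : ℕ+ × ℕ+ // Nat.gcd (p.1 : ℕ) (p.2 : ℕ) = 1} =>
      (1 - z ^ (p.val.2 : ℕ) / (2:ℝ) ^ (p.val.1 : ℕ)) ^ ((1:ℝ) / (p.val.2 : ℝ))) (1 - z) := by
    rw [show (1 - z) = rexp (Real.log (1 - z)) from (Real.exp_log hz1').symm]
    refine hP.congr_fun fun p => ?_
    have hx1 : z ^ ((p.val.2:ℕ+):ℕ) / (2:ℝ) ^ ((p.val.1:ℕ+):ℕ) < 1 := hxlt _ _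
    have hpos : 0 < 1 - z ^ ((p.val.2:ℕ+):ℕ) / (2:ℝ) ^ ((p.val.1:ℕ+):ℕ) := by linarith
    rw [Function.comp_apply, Real.rpow_def_of_pos hpos, mul_comm]
  exact hP'.tprod_eq

end
end

section
/- For real y, z with 0 ≤ y < 1, 0 ≤ z < 1: ∑_{(a,b): a,b ≥ 1, gcd(a,b)=1} (1/a) · log(1 - y^a z^b) = (z/(1-z)) · log(1 - y). Equivalently, ∏_{gcd(a,b)=1, a,b≥1} (1 - y^a z^b)^{1/a} = (1-y)^{z/(1-z)}. -/
open Real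

private lemma pnat_hasSum_of_shift {f : ℕ → ℝ} {a : ℝ} (h : HasSum (fun n : ℕ => f (n + 1)) a) :
    HasSum (fun k : ℕ+ => f (k : ℕ)) a := by
  have h2 := (Equiv.pnatEquivNat.hasSum_iff (f := fun n : ℕ => f (n + 1))).2 h
  have he : (fun k : ℕ+ => f (k : ℕ)) = (fun n : ℕ => f (n + 1)) ∘ Equiv.pnatEquivNat := by
    funext k
    simp [Function.comp, PNat.natPred_add_one]
  rw [he]
  exact h2

private lemma hasSum_pnat_log {x : ℝ} (h0 : 0 ≤ x) (h1 : x < 1) :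
    HasSum (fun k : ℕ+ => x ^ (k : ℕ) / (k : ℕ)) (-Real.log (1 - x)) := by
  have h := hasSum_pow_div_log_of_abs_lt_one (x := x) (by rwa [abs_of_nonneg h0])
  apply pnat_hasSum_of_shift (f := fun n : ℕ => x ^ n / (n : ℝ))
  convert h using 2 with n
  push_cast
  ring

private lemma hasSum_pnat_geom {z : ℝ} (h0 : 0 ≤ z) (h1 : z < 1) :
    HasSum (fun k : ℕ+ => z ^ (k : ℕ)) (z / (1 - z)) := by
  apply pnat_hasSum_of_shift (f := fun n : ℕ => z ^ n)
  have h := (hasSum_geometric_of_lt_one h0 h1).mul_left z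
  rw [div_eq_mul_inv]
  convert h using 2 with n
  · rfl
  rw [pow_succ]
  ring

private def pcmap : {p : ℕ+ × ℕ+ // Nat.gcd (p.1 : ℕ) (p.2 : ℕ) = 1} × ℕ+ → ℕ+ × ℕ+ :=
  fun q => (q.1.val.1 * q.2, q.1.val.2 * q.2)

private lemma pcmap_bij : Function.Bijective pcmap := by
  constructor
  · rintro ⟨⟨⟨a, b⟩, hab⟩, k⟩ ⟨⟨⟨a', b'⟩, hab'⟩, k'⟩ h
    simp only [pcmap, Prod.mk.injEq] at h
    obtain ⟨h1, h2⟩ := h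
    have e1 : (a : ℕ) * (k : ℕ) = (a' : ℕ) * (k' : ℕ) := by
      have := congrArg (fun t : ℕ+ => (t : ℕ)) h1
      simpa [PNat.mul_coe] using this
    have e2 : (b : ℕ) * (k : ℕ) = (b' : ℕ) * (k' : ℕ) := by
      have := congrArg (fun t : ℕ+ => (t : ℕ)) h2
      simpa [PNat.mul_coe] using this
    have hk : (k : ℕ) = (k' : ℕ) := by
      have g1 : Nat.gcd ((a : ℕ) * (k : ℕ)) ((b : ℕ) * (k : ℕ)) = (k : ℕ) := by
        rw [Nat.gcd_mul_right, hab, one_mul]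
      have g2 : Nat.gcd ((a' : ℕ) * (k' : ℕ)) ((b' : ℕ) * (k' : ℕ)) = (k' : ℕ) := by
        rw [Nat.gcd_mul_right, hab', one_mul]
      rw [← g1, e1, e2, g2]
    have hkk : k = k' := PNat.coe_injective hk
    have ha : a = a' := by
      apply PNat.coe_injective
      have := e1
      rw [hk] at this
      exact Nat.eq_of_mul_eq_mul_right k'.pos this
    have hb : b = b' := by
      apply PNat.coe_injective
      have := e2
      rw [hk] at this
      exact Nat.eq_of_mul_eq_mul_right k'.pos this
    subst ha; subst hb; subst hkk
    rfl
  · rintro ⟨m, n⟩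
    have hg : 0 < Nat.gcd (m : ℕ) (n : ℕ) := Nat.gcd_pos_of_pos_left _ m.pos
    have hdm : Nat.gcd (m : ℕ) (n : ℕ) ∣ (m : ℕ) := Nat.gcd_dvd_left _ _
    have hdn : Nat.gcd (m : ℕ) (n : ℕ) ∣ (n : ℕ) := Nat.gcd_dvd_right _ _
    refine ⟨⟨⟨(⟨(m : ℕ) / Nat.gcd (m : ℕ) (n : ℕ), Nat.div_pos (Nat.le_of_dvd m.pos hdm) hg⟩,
              ⟨(n : ℕ) / Nat.gcd (m : ℕ) (n : ℕ), Nat.div_pos (Nat.le_of_dvd n.pos hdn) hg⟩),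
            Nat.coprime_div_gcd_div_gcd hg⟩, ⟨Nat.gcd (m : ℕ) (n : ℕ), hg⟩⟩, ?_⟩
    simp only [pcmap]
    refine Prod.ext ?_ ?_ <;> apply PNat.coe_injective <;>
      simp only [PNat.mul_coe, PNat.mk_coe]
    · exact Nat.div_mul_cancel hdm
    · exact Nat.div_mul_cancel hdn

set_option maxHeartbeats 1000000 in
theorem stmt_14 (y z : ℝ) (hy0 : 0 ≤ y) (hy1 : y < 1) (hz0 : 0 ≤ z) (hz1 : z < 1) :
    (∑' p : {p : ℕ+ × ℕ+ // Nat.gcd (p.1 : ℕ) (p.2 : ℕ) = 1},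
        (1 / (p.val.1 : ℝ)) * Real.log (1 - y ^ (p.val.1 : ℕ) * z ^ (p.val.2 : ℕ)) =
      z / (1 - z) * Real.log (1 - y)) ∧
    (∏' p : {p : ℕ+ × ℕ+ // Nat.gcd (p.1 : ℕ) (p.2 : ℕ) = 1},
        (1 - y ^ (p.val.1 : ℕ) * z ^ (p.val.2 : ℕ)) ^ ((1 : ℝ) / (p.val.1 : ℝ)) =
      (1 - y) ^ (z / (1 - z))) := by
  have h1y : (0 : ℝ) < 1 - y := by linarith
  have hxnn : ∀ a b : ℕ+, 0 ≤ y ^ (a : ℕ) * z ^ (b : ℕ) := fun a b =>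
    mul_nonneg (pow_nonneg hy0 _) (pow_nonneg hz0 _)
  have hxlt : ∀ a b : ℕ+, y ^ (a : ℕ) * z ^ (b : ℕ) < 1 := by
    intro a b
    have h1 : y ^ (a : ℕ) * z ^ (b : ℕ) ≤ 1 * z ^ (b : ℕ) :=
      mul_le_mul_of_nonneg_right (pow_le_one₀ hy0 hy1.le) (pow_nonneg hz0 _)
    have h2 : z ^ (b : ℕ) ≤ z ^ 1 := pow_le_pow_of_le_one hz0 hz1.le b.one_le
    rw [one_mul] at h1
    rw [pow_one] at h2
    linarith
  -- the 1D series
  have hY : HasSum (fun m : ℕ+ => y ^ (m : ℕ) / (m : ℕ)) (-Real.log (1 - y)) :=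
    hasSum_pnat_log hy0 hy1
  have hZ : HasSum (fun n : ℕ+ => z ^ (n : ℕ)) (z / (1 - z)) := hasSum_pnat_geom hz0 hz1
  -- summability of the norms
  have hYnn : ∀ m : ℕ+, 0 ≤ y ^ (m : ℕ) / (m : ℕ) := fun m =>
    div_nonneg (pow_nonneg hy0 _) (Nat.cast_nonneg _)
  have hYn : Summable fun m : ℕ+ => ‖y ^ (m : ℕ) / (m : ℕ)‖ :=
    hY.summable.congr fun m => (Real.norm_of_nonneg (hYnn m)).symm
  have hZn : Summable fun n : ℕ+ => ‖z ^ (n : ℕ)‖ :=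
    hZ.summable.congr fun n => (Real.norm_of_nonneg (pow_nonneg hz0 _)).symm
  -- the 2D series over all pairs
  have hprod : HasSum (fun p : ℕ+ × ℕ+ => y ^ (p.1 : ℕ) / (p.1 : ℕ) * z ^ (p.2 : ℕ))
      (-Real.log (1 - y) * (z / (1 - z))) :=
    hY.mul hZ (summable_mul_of_summable_norm (f := fun m : ℕ+ => y ^ (m : ℕ) / (m : ℕ))
      (g := fun n : ℕ+ => z ^ (n : ℕ)) hYn hZn)
  have hG : HasSum (fun p : ℕ+ × ℕ+ => -(y ^ (p.1 : ℕ) * z ^ (p.2 : ℕ)) / (p.1 : ℕ))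
      (Real.log (1 - y) * (z / (1 - z))) := by
    have h2 := hprod.neg
    have hfun : (fun p : ℕ+ × ℕ+ => -(y ^ (p.1 : ℕ) * z ^ (p.2 : ℕ)) / (p.1 : ℕ)) =
        fun p : ℕ+ × ℕ+ => -(y ^ (p.1 : ℕ) / (p.1 : ℕ) * z ^ (p.2 : ℕ)) :=
      funext fun p => by ring
    have hval : Real.log (1 - y) * (z / (1 - z)) = -(-Real.log (1 - y) * (z / (1 - z))) := by
      ring
    rw [hfun, hval]
    exact h2
  -- transport along the bijection
  have hF : HasSum ((fun p : ℕ+ × ℕ+ => -(y ^ (p.1 : ℕ) * z ^ (p.2 : ℕ)) / (p.1 : ℕ)) ∘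
      (Equiv.ofBijective pcmap pcmap_bij)) (Real.log (1 - y) * (z / (1 - z))) :=
    ((Equiv.ofBijective pcmap pcmap_bij).hasSum_iff).2 hG
  -- the fiberwise sums
  have hfiber : ∀ t : {p : ℕ+ × ℕ+ // Nat.gcd (p.1 : ℕ) (p.2 : ℕ) = 1},
      HasSum (fun k : ℕ+ => ((fun p : ℕ+ × ℕ+ => -(y ^ (p.1 : ℕ) * z ^ (p.2 : ℕ)) / (p.1 : ℕ)) ∘
        (Equiv.ofBijective pcmap pcmap_bij)) (t, k))
      (1 / (t.val.1 : ℝ) * Real.log (1 - y ^ (t.val.1 : ℕ) * z ^ (t.val.2 : ℕ))) := by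
    rintro ⟨⟨a, b⟩, hab⟩
    have hx0 := hxnn a b
    have hx1 := hxlt a b
    have hser := (hasSum_pnat_log hx0 hx1).mul_left (-(1 / (a : ℝ)))
    have hval : -(1 / (a : ℝ)) * -Real.log (1 - y ^ (a : ℕ) * z ^ (b : ℕ)) =
        1 / (a : ℝ) * Real.log (1 - y ^ (a : ℕ) * z ^ (b : ℕ)) := by ring
    rw [hval] at hser
    convert hser using 2 with k
    · rfl
    simp only [Function.comp, Equiv.ofBijective_apply, pcmap]
    rw [mul_pow, ← pow_mul, ← pow_mul]
    push_cast
    ring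
  have hTot : HasSum (fun t : {p : ℕ+ × ℕ+ // Nat.gcd (p.1 : ℕ) (p.2 : ℕ) = 1} =>
      1 / (t.val.1 : ℝ) * Real.log (1 - y ^ (t.val.1 : ℕ) * z ^ (t.val.2 : ℕ)))
      (Real.log (1 - y) * (z / (1 - z))) :=
    HasSum.prod_fiberwise hF hfiber
  constructor
  · rw [hTot.tsum_eq, mul_comm]
  · have hprodExp : HasProd (rexp ∘ fun t : {p : ℕ+ × ℕ+ // Nat.gcd (p.1 : ℕ) (p.2 : ℕ) = 1} =>
        1 / (t.val.1 : ℝ) * Real.log (1 - y ^ (t.val.1 : ℕ) * z ^ (t.val.2 : ℕ)))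
        (rexp (Real.log (1 - y) * (z / (1 - z)))) := hTot.rexp
    have heq : (fun t : {p : ℕ+ × ℕ+ // Nat.gcd (p.1 : ℕ) (p.2 : ℕ) = 1} =>
        (1 - y ^ (t.val.1 : ℕ) * z ^ (t.val.2 : ℕ)) ^ ((1 : ℝ) / (t.val.1 : ℝ))) =
        (rexp ∘ fun t => 1 / (t.val.1 : ℝ) * Real.log (1 - y ^ (t.val.1 : ℕ) * z ^ (t.val.2 : ℕ))) := by
      funext t
      have hpos : 0 < 1 - y ^ (t.val.1 : ℕ) * z ^ (t.val.2 : ℕ) := by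
        have := hxlt t.val.1 t.val.2
        linarith
      rw [Function.comp_apply, Real.rpow_def_of_pos hpos, mul_comm]
    rw [heq, hprodExp.tprod_eq, Real.rpow_def_of_pos h1y]
end
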